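/- Corollary 2 (validity of bounds with only covariate-specific data): let P be a counterfactual joint distribution on Ω and let k ≤ n. The set S₁(P) is a nonempty compact subset of the probability simplex on Ω, hence the objective Q ↦ Q({(r,z,t) : r s = s for all s < k}) attains a minimum value LB₁ and a maximum value UB₁ on S₁(P); moreover LB₁ ≤ PNS(k) ≤ UB₁, where PNS(k) := P({(r,z,t) : r s = s for all s < k}). -/

import Mathlib

/-- The probability of an event `E` under a mass function `P` on a finite type. -/
noncomputable def prob {Ω : Type*} [Fintype Ω] (P : Ω → ℝ) (E : Set Ω) : ℝ :=
  ∑ ω, E.indicator P ω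

/-- The probability simplex: nonnegative functions summing to one. -/
def simplexSet (Ω : Type*) [Fintype Ω] : Set (Ω → ℝ) :=
  {Q | (∀ ω, 0 ≤ Q ω) ∧ ∑ ω, Q ω = 1}

/-- The counterfactual sample space: potential outcomes `r : Fin n → Fin n`
(`r s` is `Y_{x_s}`), covariates `z : Π i, Z i`, and treatment `t : Fin n`. -/
abbrev CfOmega (n m : ℕ) (Z : Fin m → Type) [∀ i, Fintype (Z i)] : Type :=
  (Fin n → Fin n) × ((i : Fin m) → Z i) × Fin n

/-- The Corollary 2 feasible set `S₁(P)`: mass functions matching the covariate-specific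
experimental constraints `Q(Y_{x_t} = s, Z_i = z_i) = P(Y_{x_t} = s, Z_i = z_i)` and
covariate-specific observational constraints
`Q(X = t, Y_{x_t} = s, Z_i = z_i) = P(X = t, Y_{x_t} = s, Z_i = z_i)` for every single
covariate index `i`. -/
def feasibleSet1 (n m : ℕ) (Z : Fin m → Type) [∀ i, Fintype (Z i)]
    (P : CfOmega n m Z → ℝ) : Set (CfOmega n m Z → ℝ) :=
  {Q | Q ∈ simplexSet (CfOmega n m Z) ∧
    ∀ (s t : Fin n) (i : Fin m) (zi : Z i),
      (prob Q {ω | ω.1 t = s ∧ ω.2.1 i = zi} =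
        prob P {ω | ω.1 t = s ∧ ω.2.1 i = zi}) ∧
      (prob Q {ω | ω.2.2 = t ∧ ω.1 t = s ∧ ω.2.1 i = zi} =
        prob P {ω | ω.2.2 = t ∧ ω.1 t = s ∧ ω.2.1 i = zi})}

/-- The PNS(k) event `{(r,z,t) : r s = s for all s < k}` (after relabeling of outcomes). -/
def pnsEvent (n m : ℕ) (Z : Fin m → Type) [∀ i, Fintype (Z i)] (k : ℕ) :
    Set (CfOmega n m Z) :=
  {ω | ∀ s : Fin n, (s : ℕ) < k → ω.1 s = s}

lemma continuous_prob {Ω : Type*} [Fintype Ω] (E : Set Ω) :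
    Continuous fun Q : Ω → ℝ => prob Q E := by
  unfold prob
  apply continuous_finset_sum
  intro ω _
  by_cases h : ω ∈ E
  · simpa [Set.indicator, h] using continuous_apply ω
  · simpa [Set.indicator, h] using continuous_const

lemma simplexSet_eq (Ω : Type*) [Fintype Ω] : simplexSet Ω = stdSimplex ℝ Ω := rfl

lemma isClosed_feasibleSet1 (n m : ℕ) (Z : Fin m → Type) [∀ i, Fintype (Z i)]
    (P : CfOmega n m Z → ℝ) : IsClosed (feasibleSet1 n m Z P) := by
  have : feasibleSet1 n m Z P =
      simplexSet (CfOmega n m Z) ∩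
      ⋂ (s : Fin n) (t : Fin n) (i : Fin m) (zi : Z i),
        ({Q | prob Q {ω : CfOmega n m Z | ω.1 t = s ∧ ω.2.1 i = zi} =
          prob P {ω | ω.1 t = s ∧ ω.2.1 i = zi}} ∩
        {Q | prob Q {ω : CfOmega n m Z | ω.2.2 = t ∧ ω.1 t = s ∧ ω.2.1 i = zi} =
          prob P {ω | ω.2.2 = t ∧ ω.1 t = s ∧ ω.2.1 i = zi}}) := by
    ext Q
    simp only [feasibleSet1, Set.mem_setOf_eq, Set.mem_inter_iff, Set.mem_iInter]
    try tauto
  rw [this]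
  refine IsClosed.inter ?_ ?_
  · rw [simplexSet_eq]; exact isClosed_stdSimplex _ _
  · refine isClosed_iInter fun s => isClosed_iInter fun t => isClosed_iInter fun i =>
      isClosed_iInter fun zi => IsClosed.inter ?_ ?_ <;>
    exact isClosed_eq (continuous_prob _) continuous_const

/-- Corollary 2 (validity of bounds with only covariate-specific data): `S₁(P)` is a
nonempty compact subset of the probability simplex, the objective `Q ↦ Q(PNS(k)-event)`
attains a minimum `LB₁` and a maximum `UB₁` on `S₁(P)`, and `LB₁ ≤ PNS(k) ≤ UB₁`. -/
theorem corollary2_valid_bounds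
    (n m : ℕ) (Z : Fin m → Type) [∀ i, Fintype (Z i)] [∀ i, Nonempty (Z i)]
    (P : CfOmega n m Z → ℝ) (hP : P ∈ simplexSet (CfOmega n m Z))
    (k : ℕ) (hk : k ≤ n) :
    (feasibleSet1 n m Z P).Nonempty ∧
    IsCompact (feasibleSet1 n m Z P) ∧
    feasibleSet1 n m Z P ⊆ simplexSet (CfOmega n m Z) ∧
    ∃ LB₁ UB₁ : ℝ,
      IsLeast ((fun Q => prob Q (pnsEvent n m Z k)) '' feasibleSet1 n m Z P) LB₁ ∧
      IsGreatest ((fun Q => prob Q (pnsEvent n m Z k)) '' feasibleSet1 n m Z P) UB₁ ∧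
      LB₁ ≤ prob P (pnsEvent n m Z k) ∧ prob P (pnsEvent n m Z k) ≤ UB₁ := by
  have hPmem : P ∈ feasibleSet1 n m Z P := ⟨hP, fun s t i zi => ⟨rfl, rfl⟩⟩
  have hne : (feasibleSet1 n m Z P).Nonempty := ⟨P, hPmem⟩
  have hsub : feasibleSet1 n m Z P ⊆ simplexSet (CfOmega n m Z) := fun Q hQ => hQ.1
  have hcpt : IsCompact (feasibleSet1 n m Z P) := by
    refine IsCompact.of_isClosed_subset ?_ (isClosed_feasibleSet1 n m Z P) hsub
    rw [simplexSet_eq]; exact isCompact_stdSimplex _ _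
  have hcont : Continuous fun Q : CfOmega n m Z → ℝ => prob Q (pnsEvent n m Z k) :=
    continuous_prob _
  obtain ⟨Qmin, hQmin, hmin⟩ := hcpt.exists_isMinOn hne hcont.continuousOn
  obtain ⟨Qmax, hQmax, hmax⟩ := hcpt.exists_isMaxOn hne hcont.continuousOn
  refine ⟨hne, hcpt, hsub, _, _,
    ⟨⟨Qmin, hQmin, rfl⟩, ?_⟩, ⟨⟨Qmax, hQmax, rfl⟩, ?_⟩, hmin hPmem, hmax hPmem⟩
  · rintro x ⟨Q, hQ, rfl⟩; exact hmin hQ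
  · rintro x ⟨Q, hQ, rfl⟩; exact hmax hQ
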